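/- (Compatibility conditions for the vertex-value/edge-flux interpolation of quadratics on a rectangle.) Let L, H > 0 and let K = [0,L] × [0,H] be a rectangle with vertices a₁ = (0,H), a₂ = (0,0), a₃ = (L,0), a₄ = (L,H) and edges Γ₁ = {0}×[0,H], Γ₂ = [0,L]×{0}, Γ₃ = {L}×[0,H], Γ₄ = [0,L]×{H}. Given real numbers α₁, α₂, α₃, α₄ and β₁, β₂, β₃, β₄, there exists a unique polynomial function p : ℝ² → ℝ of total degree at most 2 such that p(aᵢ) = αᵢ for i = 1,…,4, ⨍_{Γ₁} ∂p/∂x = β₁, ⨍_{Γ₂} ∂p/∂y = β₂, ⨍_{Γ₃} ∂p/∂x = β₃ and ⨍_{Γ₄} ∂p/∂y = β₄, if and only if the two compatibility conditions (α₄ − α₁)/L + (α₃ − α₂)/L = β₁ + β₃ and (α₄ − α₃)/H + (α₁ − α₂)/H = β₂ + β₄ hold. -/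

import Mathlib

/-- The average of a function over the segment from `p` to `q`. -/
noncomputable def edgeAvg (p q : ℝ × ℝ) (v : ℝ × ℝ → ℝ) : ℝ :=
  ∫ t in (0:ℝ)..1, v ((1 - t) • p + t • q)

lemma avg_lin (a b : ℝ) : ∫ t in (0:ℝ)..1, (a * t + b) = a / 2 + b := by
  rw [intervalIntegral.integral_add (f := fun t : ℝ => a * t) (((continuous_const.mul continuous_id').intervalIntegrable 0 1))
    (intervalIntegrable_const), intervalIntegral.integral_const_mul,
    integral_id, intervalIntegral.integral_const]
  norm_num; ring

lemma quadDerivX (c20 c11 c02 c10 c01 c00 : ℝ) (z : ℝ × ℝ) :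
    fderiv ℝ (fun z : ℝ × ℝ => c20 * z.1 ^ 2 + c11 * z.1 * z.2 + c02 * z.2 ^ 2
      + c10 * z.1 + c01 * z.2 + c00) z (1, 0) = 2 * c20 * z.1 + c11 * z.2 + c10 := by
  have hX : HasFDerivAt (fun z : ℝ × ℝ => z.1) (ContinuousLinearMap.fst ℝ ℝ ℝ) z :=
    hasFDerivAt_fst
  have hY : HasFDerivAt (fun z : ℝ × ℝ => z.2) (ContinuousLinearMap.snd ℝ ℝ ℝ) z :=
    hasFDerivAt_snd
  have h := (((((((hX.mul hX).const_mul c20).add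
      (((hX.const_mul c11).mul hY))).add
      (((hY.mul hY).const_mul c02))).add
      (hX.const_mul c10)).add
      (hY.const_mul c01)).add_const c00)
  rw [show (fun z : ℝ × ℝ => c20 * z.1 ^ 2 + c11 * z.1 * z.2 + c02 * z.2 ^ 2
      + c10 * z.1 + c01 * z.2 + c00)
    = (fun z : ℝ × ℝ => c20 * (z.1 * z.1) + c11 * z.1 * z.2 + c02 * (z.2 * z.2)
      + c10 * z.1 + c01 * z.2 + c00) from funext fun z => by ring]
  rw [show fderiv ℝ (fun z : ℝ × ℝ => c20 * (z.1 * z.1) + c11 * z.1 * z.2 + c02 * (z.2 * z.2)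
      + c10 * z.1 + c01 * z.2 + c00) z = _ from h.fderiv]
  simp
  ring

lemma quadDerivY (c20 c11 c02 c10 c01 c00 : ℝ) (z : ℝ × ℝ) :
    fderiv ℝ (fun z : ℝ × ℝ => c20 * z.1 ^ 2 + c11 * z.1 * z.2 + c02 * z.2 ^ 2
      + c10 * z.1 + c01 * z.2 + c00) z (0, 1) = c11 * z.1 + 2 * c02 * z.2 + c01 := by
  have hX : HasFDerivAt (fun z : ℝ × ℝ => z.1) (ContinuousLinearMap.fst ℝ ℝ ℝ) z :=
    hasFDerivAt_fst
  have hY : HasFDerivAt (fun z : ℝ × ℝ => z.2) (ContinuousLinearMap.snd ℝ ℝ ℝ) z :=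
    hasFDerivAt_snd
  have h := (((((((hX.mul hX).const_mul c20).add
      (((hX.const_mul c11).mul hY))).add
      (((hY.mul hY).const_mul c02))).add
      (hX.const_mul c10)).add
      (hY.const_mul c01)).add_const c00)
  rw [show (fun z : ℝ × ℝ => c20 * z.1 ^ 2 + c11 * z.1 * z.2 + c02 * z.2 ^ 2
      + c10 * z.1 + c01 * z.2 + c00)
    = (fun z : ℝ × ℝ => c20 * (z.1 * z.1) + c11 * z.1 * z.2 + c02 * (z.2 * z.2)
      + c10 * z.1 + c01 * z.2 + c00) from funext fun z => by ring]
  rw [show fderiv ℝ (fun z : ℝ × ℝ => c20 * (z.1 * z.1) + c11 * z.1 * z.2 + c02 * (z.2 * z.2)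
      + c10 * z.1 + c01 * z.2 + c00) z = _ from h.fderiv]
  simp
  ring

lemma edge1 (c20 c11 c02 c10 c01 c00 H : ℝ) :
    edgeAvg (0, 0) (0, H) (fun z => fderiv ℝ (fun z : ℝ × ℝ => c20 * z.1 ^ 2
      + c11 * z.1 * z.2 + c02 * z.2 ^ 2 + c10 * z.1 + c01 * z.2 + c00) z (1, 0))
      = c11 * H / 2 + c10 := by
  unfold edgeAvg
  simp only [quadDerivX]
  rw [intervalIntegral.integral_congr (g := fun t => (c11 * H) * t + c10)
    (fun t _ => by simp; ring), avg_lin]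

lemma edge2 (c20 c11 c02 c10 c01 c00 L : ℝ) :
    edgeAvg (0, 0) (L, 0) (fun z => fderiv ℝ (fun z : ℝ × ℝ => c20 * z.1 ^ 2
      + c11 * z.1 * z.2 + c02 * z.2 ^ 2 + c10 * z.1 + c01 * z.2 + c00) z (0, 1))
      = c11 * L / 2 + c01 := by
  unfold edgeAvg
  simp only [quadDerivY]
  rw [intervalIntegral.integral_congr (g := fun t => (c11 * L) * t + c01)
    (fun t _ => by simp; ring), avg_lin]

lemma edge3 (c20 c11 c02 c10 c01 c00 L H : ℝ) :
    edgeAvg (L, 0) (L, H) (fun z => fderiv ℝ (fun z : ℝ × ℝ => c20 * z.1 ^ 2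
      + c11 * z.1 * z.2 + c02 * z.2 ^ 2 + c10 * z.1 + c01 * z.2 + c00) z (1, 0))
      = 2 * c20 * L + c11 * H / 2 + c10 := by
  unfold edgeAvg
  simp only [quadDerivX]
  rw [intervalIntegral.integral_congr (g := fun t => (c11 * H) * t + (2 * c20 * L + c10))
    (fun t _ => by simp; ring), avg_lin]
  ring

lemma edge4 (c20 c11 c02 c10 c01 c00 L H : ℝ) :
    edgeAvg (0, H) (L, H) (fun z => fderiv ℝ (fun z : ℝ × ℝ => c20 * z.1 ^ 2
      + c11 * z.1 * z.2 + c02 * z.2 ^ 2 + c10 * z.1 + c01 * z.2 + c00) z (0, 1))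
      = c11 * L / 2 + 2 * c02 * H + c01 := by
  unfold edgeAvg
  simp only [quadDerivY]
  rw [intervalIntegral.integral_congr (g := fun t => (c11 * L) * t + (2 * c02 * H + c01))
    (fun t _ => by simp; ring), avg_lin]
  ring

noncomputable def f11 (L H α₁ α₂ α₃ α₄ : ℝ) : ℝ := (α₄ - α₃ - α₁ + α₂) / (L * H)
noncomputable def f10 (L H α₁ α₂ α₃ α₄ β₁ : ℝ) : ℝ := β₁ - f11 L H α₁ α₂ α₃ α₄ * H / 2
noncomputable def f20 (L H α₁ α₂ α₃ α₄ β₁ : ℝ) : ℝ :=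
  (α₃ - α₂ - f10 L H α₁ α₂ α₃ α₄ β₁ * L) / L ^ 2
noncomputable def f01 (L H α₁ α₂ α₃ α₄ β₂ : ℝ) : ℝ := β₂ - f11 L H α₁ α₂ α₃ α₄ * L / 2
noncomputable def f02 (L H α₁ α₂ α₃ α₄ β₂ : ℝ) : ℝ :=
  (α₁ - α₂ - f01 L H α₁ α₂ α₃ α₄ β₂ * H) / H ^ 2


/-- Compatibility conditions for the vertex-value/edge-flux interpolation of quadratics
on the rectangle [0,L] × [0,H] with vertices a₁ = (0,H), a₂ = (0,0), a₃ = (L,0),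
a₄ = (L,H): there is a unique quadratic polynomial with prescribed vertex values αᵢ and
prescribed averaged edge derivatives βᵢ iff the two compatibility conditions hold. -/
theorem rectangle_quadratic_interpolation_iff_compatible
    (L H : ℝ) (hL : 0 < L) (hH : 0 < H)
    (α₁ α₂ α₃ α₄ β₁ β₂ β₃ β₄ : ℝ) :
    (∃! p : ℝ × ℝ → ℝ,
      (∃ c20 c11 c02 c10 c01 c00 : ℝ,
        p = fun z => c20 * z.1 ^ 2 + c11 * z.1 * z.2 + c02 * z.2 ^ 2
          + c10 * z.1 + c01 * z.2 + c00) ∧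
      p (0, H) = α₁ ∧ p (0, 0) = α₂ ∧ p (L, 0) = α₃ ∧ p (L, H) = α₄ ∧
      edgeAvg (0, 0) (0, H) (fun z => fderiv ℝ p z (1, 0)) = β₁ ∧
      edgeAvg (0, 0) (L, 0) (fun z => fderiv ℝ p z (0, 1)) = β₂ ∧
      edgeAvg (L, 0) (L, H) (fun z => fderiv ℝ p z (1, 0)) = β₃ ∧
      edgeAvg (0, H) (L, H) (fun z => fderiv ℝ p z (0, 1)) = β₄) ↔
    ((α₄ - α₁) / L + (α₃ - α₂) / L = β₁ + β₃ ∧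
     (α₄ - α₃) / H + (α₁ - α₂) / H = β₂ + β₄) := by
  have hL' := hL.ne'
  have hH' := hH.ne'
  constructor
  · rintro ⟨p, ⟨⟨c20, c11, c02, c10, c01, c00, rfl⟩, h1, h2, h3, h4, g1, g2, g3, g4⟩, -⟩
    rw [edge1 c20 c11 c02 c10 c01 c00 H] at g1
    rw [edge2 c20 c11 c02 c10 c01 c00 L] at g2
    rw [edge3 c20 c11 c02 c10 c01 c00 L H] at g3
    rw [edge4 c20 c11 c02 c10 c01 c00 L H] at g4
    have e1 : c02 * H ^ 2 + c01 * H + c00 = α₁ := by rw [← h1]; norm_num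
    have e2 : c00 = α₂ := by rw [← h2]; norm_num
    have e3 : c20 * L ^ 2 + c10 * L + c00 = α₃ := by rw [← h3]; norm_num
    have e4 : c20 * L ^ 2 + c11 * L * H + c02 * H ^ 2 + c10 * L + c01 * H + c00 = α₄ := by
      rw [← h4]
    constructor
    · field_simp
      linear_combination e1 - e4 + e2 - e3 + L * g1 + L * g3
    · field_simp
      linear_combination e3 - e4 + e2 - e1 + H * g2 + H * g4
  · rintro ⟨comp1, comp2⟩
    have C1 : α₄ - α₁ + (α₃ - α₂) = (β₁ + β₃) * L := by field_simp at comp1; linarith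
    have C2 : α₄ - α₃ + (α₁ - α₂) = (β₂ + β₄) * H := by field_simp at comp2; linarith
    refine ⟨fun z => f20 L H α₁ α₂ α₃ α₄ β₁ * z.1 ^ 2 + f11 L H α₁ α₂ α₃ α₄ * z.1 * z.2
        + f02 L H α₁ α₂ α₃ α₄ β₂ * z.2 ^ 2 + f10 L H α₁ α₂ α₃ α₄ β₁ * z.1
        + f01 L H α₁ α₂ α₃ α₄ β₂ * z.2 + α₂,
      ⟨⟨_, _, _, _, _, _, rfl⟩, ?_, ?_, ?_, ?_, ?_, ?_, ?_, ?_⟩, ?_⟩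
    · simp only [f02, f01, f11]; field_simp; ring
    · norm_num
    · simp only [f20, f10, f11]; field_simp; ring
    · simp only [f20, f02, f10, f01, f11]; field_simp; ring
    · rw [edge1]; simp only [f10]; ring
    · rw [edge2]; simp only [f01]; ring
    · rw [edge3]; simp only [f20, f10, f11]; field_simp
      linear_combination 2 * C1
    · rw [edge4]; simp only [f02, f01, f11]; field_simp
      linear_combination 2 * C2
    · rintro q ⟨⟨d20, d11, d02, d10, d01, d00, rfl⟩, h1, h2, h3, h4, g1, g2, g3, g4⟩
      rw [edge1 d20 d11 d02 d10 d01 d00 H] at g1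
      rw [edge2 d20 d11 d02 d10 d01 d00 L] at g2
      have e1 : d02 * H ^ 2 + d01 * H + d00 = α₁ := by rw [← h1]; norm_num
      have e2 : d00 = α₂ := by rw [← h2]; norm_num
      have e3 : d20 * L ^ 2 + d10 * L + d00 = α₃ := by rw [← h3]; norm_num
      have e4 : d20 * L ^ 2 + d11 * L * H + d02 * H ^ 2 + d10 * L + d01 * H + d00 = α₄ := by
        rw [← h4]
      have hd11 : d11 = (α₄ - α₃ - α₁ + α₂) / (L * H) := by
        field_simp
        linear_combination e4 - e3 - e1 + e2
      have hd10 : d10 = β₁ - d11 * H / 2 := by linarith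
      have hd20 : d20 = (α₃ - α₂ - d10 * L) / L ^ 2 := by
        field_simp
        linear_combination e3 - e2
      have hd01 : d01 = β₂ - d11 * L / 2 := by linarith
      have hd02 : d02 = (α₁ - α₂ - d01 * H) / H ^ 2 := by
        field_simp
        linear_combination e1 - e2
      funext z
      rw [hd20, hd02, hd10, hd01, hd11, e2]
      simp only [f20, f02, f10, f01, f11]
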